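/- Let r be a real number with r ≠ 0 and r^2 rational. Then r · tan r is irrational. -/

import Mathlib

noncomputable section

open intervalIntegral MeasureTheory.MeasureSpace Set Polynomial Real Filter
open scoped Nat

/-- The sequence of integrals from Cartwright's proof. -/
private def I (n : ℕ) (θ : ℝ) : ℝ := ∫ x in (-1)..1, (1 - x ^ 2) ^ n * cos (x * θ)

variable {n : ℕ} {θ : ℝ}

private lemma I_zero : I 0 θ * θ = 2 * sin θ := by
  rw [mul_comm, I]
  simp [mul_integral_comp_mul_right, two_mul]

private lemma recursion' (n : ℕ) :
    I (n + 1) θ * θ ^ 2 = - (2 * 2 * ((n + 1) * (0 ^ n * cos θ))) +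
      2 * (n + 1) * (2 * n + 1) * I n θ - 4 * (n + 1) * n * I (n - 1) θ := by
  rw [I]
  let f (x : ℝ) : ℝ := 1 - x ^ 2
  let u₁ (x : ℝ) : ℝ := f x ^ (n + 1)
  let u₁' (x : ℝ) : ℝ := - (2 * (n + 1) * x * f x ^ n)
  let v₁ (x : ℝ) : ℝ := sin (x * θ)
  let v₁' (x : ℝ) : ℝ := cos (x * θ) * θ
  let u₂ (x : ℝ) : ℝ := x * (f x) ^ n
  let u₂' (x : ℝ) : ℝ := (f x) ^ n - 2 * n * x ^ 2 * (f x) ^ (n - 1)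
  let v₂ (x : ℝ) : ℝ := cos (x * θ)
  let v₂' (x : ℝ) : ℝ := -sin (x * θ) * θ
  have hfd : Continuous f := by fun_prop
  have hu₁d : Continuous u₁' := by fun_prop
  have hv₁d : Continuous v₁' := by fun_prop
  have hu₂d : Continuous u₂' := by fun_prop
  have hv₂d : Continuous v₂' := by fun_prop
  have hu₁_eval_one : u₁ 1 = 0 := by simp only [u₁, f]; simp
  have hu₁_eval_neg_one : u₁ (-1) = 0 := by simp only [u₁, f]; simp
  have t : u₂ 1 * v₂ 1 - u₂ (-1) * v₂ (-1) = 2 * (0 ^ n * cos θ) := by simp [u₂, v₂, f, ← two_mul]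
  have hf (x) : HasDerivAt f (- 2 * x) x := by
    exact ((hasDerivAt_pow 2 x).const_sub 1).congr_deriv (by norm_num)
  have hu₁ (x) : HasDerivAt u₁ (u₁' x) x := by
    refine ((hf x).pow (n + 1)).congr_deriv ?_
    simp only [Nat.add_succ_sub_one, u₁', Nat.cast_add_one]
    ring
  have hv₁ (x) : HasDerivAt v₁ (v₁' x) x := (hasDerivAt_mul_const θ).sin
  have hu₂ (x) : HasDerivAt u₂ (u₂' x) x := by
    refine ((hasDerivAt_id' x).mul ((hf x).pow n)).congr_deriv ?_
    simp only [u₂', Pi.pow_apply]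
    ring
  have hv₂ (x) : HasDerivAt v₂ (v₂' x) x := (hasDerivAt_mul_const θ).cos
  convert_to (∫ (x : ℝ) in (-1)..1, u₁ x * v₁' x) * θ = _ using 1
  · simp_rw [u₁, v₁', ← intervalIntegral.integral_mul_const, sq θ, mul_assoc]
    rfl
  rw [integral_mul_deriv_eq_deriv_mul (fun x _ => hu₁ x) (fun x _ => hv₁ x)
    (hu₁d.intervalIntegrable _ _) (hv₁d.intervalIntegrable _ _), hu₁_eval_one, hu₁_eval_neg_one,
    zero_mul, zero_mul, sub_zero, zero_sub, ← integral_neg, ← integral_mul_const]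
  convert_to ((-2 : ℝ) * (n + 1)) * ∫ (x : ℝ) in (-1)..1, (u₂ x * v₂' x) = _ using 1
  · rw [← integral_const_mul]
    congr 1 with x
    dsimp [u₁', v₁, u₂, v₂']
    ring
  rw [integral_mul_deriv_eq_deriv_mul (fun x _ => hu₂ x) (fun x _ => hv₂ x)
    (hu₂d.intervalIntegrable _ _) (hv₂d.intervalIntegrable _ _),
    mul_sub, t, neg_mul, neg_mul, neg_mul, sub_neg_eq_add]
  have this (x) : u₂' x = (2 * n + 1) * f x ^ n - 2 * n * f x ^ (n - 1) := by
    cases n with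
    | zero => simp [u₂']
    | succ n => ring!
  simp_rw [this, sub_mul, mul_assoc _ _ (v₂ _)]
  have : Continuous v₂ := by fun_prop
  rw [mul_mul_mul_comm, integral_sub, mul_sub, add_sub_assoc]
  · congr 1
    simp_rw [integral_const_mul]
    ring!
  all_goals exact Continuous.intervalIntegrable (by fun_prop) _ _

private lemma recursion (n : ℕ) :
    I (n + 2) θ * θ ^ 2 =
      2 * (n + 2) * (2 * n + 3) * I (n + 1) θ - 4 * (n + 2) * (n + 1) * I n θ := by
  rw [recursion' (n + 1)]
  simp
  ring!

private lemma I_one : I 1 θ * θ ^ 3 = 4 * sin θ - 4 * θ * cos θ := by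
  rw [_root_.pow_succ, ← mul_assoc, recursion' 0, sub_mul, add_mul, mul_assoc _ (I 0 θ), I_zero]
  ring

/-- A uniform bound on the integrals. -/
private lemma abs_I_le (n : ℕ) (θ : ℝ) : |I n θ| ≤ 2 := by
  rw [← Real.norm_eq_abs]
  refine (norm_integral_le_of_norm_le_const ?_).trans (show (1 : ℝ) * _ ≤ _ by norm_num)
  intro x hx
  simp only [uIoc_of_le, neg_le_self_iff, zero_le_one, mem_Ioc] at hx
  rw [norm_eq_abs, abs_mul, abs_pow]
  refine mul_le_one₀ (pow_le_one₀ (abs_nonneg _) ?_) (abs_nonneg _) (abs_cos_le_one _)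
  rw [abs_le]
  constructor <;> nlinarith [hx.1, hx.2]

/-- If the integrals vanish from some point on, they all vanish. -/
private lemma I_all_zero {r : ℝ} (hr : r ≠ 0) {N : ℕ} (h : ∀ n, N ≤ n → I n r = 0) :
    ∀ n, I n r = 0 := by
  have step : ∀ j : ℕ, I (j + 1) r = 0 → I (j + 2) r = 0 → I j r = 0 := by
    intro j h1 h2
    have hrec := recursion (θ := r) j
    rw [h1, h2] at hrec
    have hc : (4 * ((j : ℝ) + 2) * ((j : ℝ) + 1)) ≠ 0 := by positivity
    have hr2 : r ^ 2 ≠ 0 := pow_ne_zero _ hr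
    have : (4 * ((j : ℝ) + 2) * ((j : ℝ) + 1)) * I j r = 0 := by linarith
    exact (mul_eq_zero.1 this).resolve_left hc
  have main : ∀ m j, N ≤ j + m → I j r = 0 := by
    intro m
    induction m with
    | zero => intro j hj; exact h j (by omega)
    | succ m ih =>
      intro j hj
      by_cases hNj : N ≤ j
      · exact h j hNj
      · exact step j (ih (j + 1) (by omega)) (ih (j + 2) (by omega))
  exact fun n => main N n (by omega)

/-- The rational sequence mirrorring the recursion. -/
private def S (x u0 u1 : ℚ) : ℕ → ℚ
  | 0 => u0
  | 1 => u1
  | (n + 2) => 2 * (2 * (n : ℚ) + 3) * S x u0 u1 (n + 1) - 4 * x * S x u0 u1 n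

/-- The key impossibility lemma. -/
private lemma no_rat (r : ℝ) (hr : r ≠ 0) (x u0 u1 : ℚ) (hx : (x : ℝ) = r ^ 2)
    (w : ℝ) (hw : w ≠ 0) (h0 : (u0 : ℝ) * w = I 0 r)
    (h1 : (u1 : ℝ) * w = I 1 r * (x : ℝ)) : False := by
  have hx0 : x ≠ 0 := by
    intro h; apply hr; have : r ^ 2 = 0 := by rw [← hx, h]; simp
    exact pow_eq_zero_iff (by norm_num) |>.1 this
  -- the identity
  have ident : ∀ n : ℕ, (S x u0 u1 n : ℝ) * (n ! : ℝ) * w = I n r * (x : ℝ) ^ n := by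
    have key : ∀ n : ℕ, ((S x u0 u1 n : ℝ) * (n ! : ℝ) * w = I n r * (x : ℝ) ^ n) ∧
        ((S x u0 u1 (n+1) : ℝ) * ((n+1)! : ℝ) * w = I (n+1) r * (x : ℝ) ^ (n+1)) := by
      intro n
      induction n with
      | zero =>
        constructor
        · simpa [S] using h0
        · simpa [S] using h1
      | succ n ih =>
        refine ⟨ih.2, ?_⟩
        have hrec := recursion (θ := r) n
        have ih1 := ih.1
        have ih2 := ih.2
        push_cast [Nat.factorial_succ] at ih1 ih2
        show (S x u0 u1 (n + 2) : ℝ) * ((n+2)! : ℝ) * w = I (n+2) r * (x:ℝ)^(n+2)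
        rw [S]
        push_cast [Nat.factorial_succ]
        linear_combination (-((x:ℝ))^(n+1)) * hrec
          + (2*(2*(n:ℝ)+3)*((n:ℝ)+2)) * ih2
          - (4*((n:ℝ)+2)*((n:ℝ)+1)*(x:ℝ)) * ih1
          - (I (n+2) r * (x:ℝ)^(n+1)) * hx
    exact fun n => (key n).1
  -- integrality
  set D : ℚ := (x.den : ℚ) * (u0.den : ℚ) * (u1.den : ℚ) with hD
  have hDpos : 0 < D := by positivity
  have ha : ∃ a : ℤ, (a : ℚ) = x * D := by
    refine ⟨x.num * u0.den * u1.den, ?_⟩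
    push_cast
    rw [hD]
    rw [show x * ((x.den:ℚ) * u0.den * u1.den) = (x * x.den) * u0.den * u1.den by ring,
      Rat.mul_den_eq_num]
  obtain ⟨a, ha⟩ := ha
  have hint : ∀ n : ℕ, ∃ z : ℤ, (z : ℚ) = S x u0 u1 n * D ^ (n + 1) := by
    have key : ∀ n : ℕ, (∃ z : ℤ, (z : ℚ) = S x u0 u1 n * D ^ (n + 1)) ∧
        (∃ z : ℤ, (z : ℚ) = S x u0 u1 (n+1) * D ^ (n + 2)) := by
      intro n
      induction n with
      | zero =>
        constructor
        · refine ⟨u0.num * x.den * u1.den, ?_⟩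
          push_cast
          rw [hD, S]
          rw [show (u0:ℚ) * ((x.den:ℚ) * u0.den * u1.den) ^ 1 =
            (u0 * u0.den) * x.den * u1.den by ring, Rat.mul_den_eq_num]
        · refine ⟨u1.num * (x.den * u0.den * (x.den * u0.den * u1.den)), ?_⟩
          push_cast
          rw [hD, S]
          rw [show (u1:ℚ) * ((x.den:ℚ) * u0.den * u1.den) ^ 2 =
            (u1 * u1.den) * (x.den * u0.den * (x.den * u0.den * u1.den)) by ring,
            Rat.mul_den_eq_num]
      | succ n ih =>
        refine ⟨ih.2, ?_⟩
        obtain ⟨z0, hz0⟩ := ih.1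
        obtain ⟨z1, hz1⟩ := ih.2
        obtain ⟨dz, hdz⟩ : ∃ dz : ℤ, (dz : ℚ) = D := by
          refine ⟨x.den * u0.den * u1.den, by push_cast [hD]; ring⟩
        refine ⟨2 * (2 * n + 3) * dz * z1 - 4 * a * dz * z0, ?_⟩
        rw [S]
        push_cast [hdz]
        linear_combination (2 * (2*(n:ℚ)+3) * D) * hz1 - (4 * D * (z0:ℚ)) * ha
          - (4 * x * D^2) * hz0
    exact fun n => (key n).1
  choose z hz using hint
  -- the bound and limit
  have habs : ∀ n : ℕ, |(z n : ℝ)| ≤ (2 * (D : ℝ) / |w|) * (((D : ℝ) * |(x : ℝ)|) ^ n / (n ! : ℝ)) := by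
    intro n
    have h1 : ((z n : ℝ)) = (S x u0 u1 n : ℝ) * ((D : ℝ)) ^ (n + 1) := by
      exact_mod_cast hz n
    have hfac : (0 : ℝ) < (n ! : ℝ) := by positivity
    have hSn : (S x u0 u1 n : ℝ) = I n r * (x : ℝ) ^ n / ((n ! : ℝ) * w) := by
      field_simp
      linear_combination ident n
    rw [h1, hSn]
    have hDR : (0:ℝ) < (D:ℝ) := by exact_mod_cast hDpos
    have heq : |I n r * (x:ℝ) ^ n / ((n !:ℝ) * w) * (D:ℝ) ^ (n + 1)|
        = |I n r| * |(x:ℝ)| ^ n * (D:ℝ) ^ (n + 1) / ((n !:ℝ) * |w|) := by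
      rw [abs_mul, abs_div, abs_mul, abs_mul, abs_pow, abs_pow, abs_of_pos hfac,
        abs_of_pos hDR]
      ring
    rw [heq, div_le_iff₀ (by positivity)]
    have hIle := abs_I_le n r
    have expand : 2 * (D:ℝ) / |w| * (((D:ℝ) * |(x:ℝ)|) ^ n / (n ! : ℝ)) * ((n ! : ℝ) * |w|)
        = 2 * ((D:ℝ)^(n+1) * |(x:ℝ)|^n) := by
      rw [mul_pow, pow_succ]
      field_simp
    rw [expand]
    nlinarith [abs_nonneg (I n r), pow_nonneg (abs_nonneg (x:ℝ)) n, pow_pos hDR (n+1),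
      mul_nonneg (pow_nonneg (abs_nonneg (x:ℝ)) n) (le_of_lt (pow_pos hDR (n+1)))]
  have hlim : Tendsto (fun n : ℕ => (2 * (D : ℝ) / |w|) * (((D : ℝ) * |(x : ℝ)|) ^ n / (n ! : ℝ)))
      atTop (nhds 0) := by
    have := (FloorSemiring.tendsto_pow_div_factorial_atTop ((D : ℝ) * |(x : ℝ)|)).const_mul
      (2 * (D : ℝ) / |w|)
    simpa using this
  have hev : ∀ᶠ n : ℕ in atTop, I n r = 0 := by
    have : ∀ᶠ n : ℕ in atTop,
        (2 * (D : ℝ) / |w|) * (((D : ℝ) * |(x : ℝ)|) ^ n / (n ! : ℝ)) < 1 :=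
      hlim.eventually_lt_const one_pos
    filter_upwards [this] with n hn
    have hz1 : |(z n : ℝ)| < 1 := lt_of_le_of_lt (habs n) hn
    have hz0 : z n = 0 := by
      have : |z n| < 1 := by exact_mod_cast hz1
      exact Int.abs_lt_one_iff.1 this
    have hSn0 : S x u0 u1 n = 0 := by
      have := hz n
      rw [hz0] at this
      have hDn : D ^ (n + 1) ≠ 0 := pow_ne_zero _ (ne_of_gt hDpos)
      exact (mul_eq_zero.1 this.symm).resolve_right hDn
    have := ident n
    rw [hSn0] at this
    push_cast at this
    have hxn : ((x : ℝ)) ^ n ≠ 0 := pow_ne_zero _ (by exact_mod_cast hx0)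
    have : I n r * (x:ℝ)^n = 0 := by linarith
    exact (mul_eq_zero.1 this).resolve_right hxn
  obtain ⟨N, hN⟩ := eventually_atTop.1 hev
  have hall := I_all_zero hr hN
  have hI0 := I_zero (θ := r)
  have hI1 := I_one (θ := r)
  rw [hall 0] at hI0
  rw [hall 1] at hI1
  have hsin : sin r = 0 := by linarith
  have hcos : cos r = 0 := by
    have : 4 * r * cos r = 0 := by rw [hsin] at hI1; linarith
    have h4r : (4 : ℝ) * r ≠ 0 := by simp [hr]
    have := (mul_eq_zero.1 (by linarith : (4 * r) * cos r = 0)).resolve_left h4r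
    exact this
  have := sin_sq_add_cos_sq r
  rw [hsin, hcos] at this
  norm_num at this

end

theorem r_mul_tan_irrational (r : ℝ) (hr : r ≠ 0) (hq : ∃ q : ℚ, r ^ 2 = (q : ℝ)) :
    Irrational (r * Real.tan r) := by
  rintro ⟨u, hu⟩
  obtain ⟨x, hx⟩ := hq
  by_cases hc : Real.cos r = 0
  · -- then sin r = ±1, use w = sin r / r
    have hs : Real.sin r ≠ 0 := by
      intro h
      have := Real.sin_sq_add_cos_sq r
      rw [h, hc] at this; norm_num at this
    refine no_rat r hr x 2 4 hx.symm (Real.sin r / r) (div_ne_zero hs hr) ?_ ?_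
    · have hI0 := I_zero (θ := r)
      push_cast
      field_simp
      linear_combination -hI0
    · have h1 := I_one (θ := r)
      rw [hc] at h1
      push_cast
      rw [← hx]
      field_simp
      linear_combination -h1
  · -- cos r ≠ 0, use w = cos r / r ^ 2
    have hr2 : r ^ 2 ≠ 0 := pow_ne_zero _ hr
    have hu' : (u : ℝ) * Real.cos r = r * Real.sin r := by
      rw [hu, Real.tan_eq_sin_div_cos]
      field_simp
    refine no_rat r hr x (2 * u) (4 * u - 4 * x) hx.symm (Real.cos r / r ^ 2)
      (div_ne_zero hc hr2) ?_ ?_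
    · have hI0 := I_zero (θ := r)
      push_cast
      field_simp
      linear_combination 2*hu' - r*hI0
    · have hI1 := I_one (θ := r)
      push_cast
      rw [← hx]
      field_simp
      linear_combination 4*hu' - r*hI1
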